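/- Let n ≥ 3, let V = {0,1,…,n−1} with the natural order, and let Q be a partial quasi-pairing of V. If there exists v ∈ V with 1 ≤ v and v+1 ≤ n−1 such that {v, v+1} ∈ Q, v̂_Q = v, and v−1 ∉ ∪Q, then {v−1, v+1} is a nontrivial module of Inv(underline(n), Q); in particular, Inv(underline(n), Q) is decomposable. -/

import Mathlib

open Set

/-- The arc relation of the tournament `Inv(underline(V), P)` obtained from the
transitive tournament on a linearly ordered type by reversing the arcs `(x,y)`
with `{x,y} ∈ P`. -/

lemma sUnion_ncard_le_two_mul (Q' : Set (Set ℕ)) (hfin : Q'.Finite) :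
    (∀ B ∈ Q', B.Finite ∧ B.ncard ≤ 2) → (⋃₀ Q').ncard ≤ 2 * Q'.ncard := by
  refine Set.Finite.induction_on
    (motive := fun s _ => (∀ B ∈ s, B.Finite ∧ B.ncard ≤ 2) → (⋃₀ s).ncard ≤ 2 * s.ncard)
    Q' hfin (by simp) ?_
  intro B S hB hS ih h
  · 
    have h1 := h B (Set.mem_insert _ _)
    have hSfin : (⋃₀ S).Finite := hS.sUnion (fun C hC => (h C (Set.mem_insert_of_mem _ hC)).1)
    rw [Set.sUnion_insert]
    calc (B ∪ ⋃₀ S).ncard ≤ B.ncard + (⋃₀ S).ncard := Set.ncard_union_le _ _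
      _ ≤ 2 + 2 * S.ncard := add_le_add h1.2 (ih fun C hC => h C (Set.mem_insert_of_mem _ hC))
      _ = 2 * (insert B S).ncard := by rw [Set.ncard_insert_of_notMem hB hS]; ring

def InvArc {α : Type*} [LinearOrder α] (P : Set (Set α)) (x y : α) : Prop :=
  (x < y ∧ ({x, y} : Set α) ∉ P) ∨ (y < x ∧ ({x, y} : Set α) ∈ P)

/-- `M` is a module of the subtournament of `Inv(·, P)` induced on the vertex set `W`. -/
def IsModuleOn {α : Type*} [LinearOrder α] (P : Set (Set α)) (W M : Set α) : Prop :=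
  M ⊆ W ∧ ∀ v ∈ W, v ∉ M →
    (∀ x ∈ M, InvArc P v x) ∨ (∀ x ∈ M, InvArc P x v)

/-- A subset of the vertex set `W` is trivial if it is empty, a singleton, or all of `W`. -/
def IsTrivialSubset {α : Type*} (W M : Set α) : Prop :=
  M = ∅ ∨ (∃ a, M = {a}) ∨ M = W

/-- A nontrivial module of the tournament `Inv(·, P)` induced on `W`. -/
def IsNontrivialModuleOn {α : Type*} [LinearOrder α] (P : Set (Set α)) (W M : Set α) : Prop :=
  IsModuleOn P W M ∧ ¬ IsTrivialSubset W M

/-- The tournament `Inv(·, P)` induced on `W` is indecomposable: all its modules are trivial. -/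
def IndecomposableOn {α : Type*} [LinearOrder α] (P : Set (Set α)) (W : Set α) : Prop :=
  ∀ M : Set α, IsModuleOn P W M → IsTrivialSubset W M

/-- The tournament `Inv(·, P)` induced on `W` is decomposable: it has a nontrivial module. -/
def DecomposableOn {α : Type*} [LinearOrder α] (P : Set (Set α)) (W : Set α) : Prop :=
  ∃ M : Set α, IsNontrivialModuleOn P W M

/-- A co-module of the tournament `Inv(·, P)` on `W`: a subset `M` of `W` such that
`M` or `W ∖ M` is a nontrivial module. -/
def IsCoModuleOn {α : Type*} [LinearOrder α] (P : Set (Set α)) (W M : Set α) : Prop :=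
  M ⊆ W ∧ (IsNontrivialModuleOn P W M ∨ IsNontrivialModuleOn P W (W \ M))

/-- `mc(underline(W))`: the family of minimal co-modules of the transitive tournament on `W`
(a minimal co-module contains no other co-module). -/
def mcOn {α : Type*} [LinearOrder α] (W : Set α) : Set (Set α) :=
  {M | IsCoModuleOn (∅ : Set (Set α)) W M ∧
    ∀ C : Set α, IsCoModuleOn (∅ : Set (Set α)) W C → C ⊆ M → C = M}

/-- `S` is a transversal of the family `F`: it meets every member of `F`. -/
def TransversalOf {α : Type*} (S : Set α) (F : Set (Set α)) : Prop :=
  ∀ C ∈ F, (S ∩ C).Nonempty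

/-- A partial pairing of `V`: a set of pairwise disjoint 2-element subsets of `V`. -/
def IsPartialPairingOn {α : Type*} (V : Set α) (P : Set (Set α)) : Prop :=
  (∀ B ∈ P, B ⊆ V ∧ B.ncard = 2) ∧
  ∀ B ∈ P, ∀ C ∈ P, B ≠ C → Disjoint B C

/-- `I` is an interval of the totally ordered set `X`: every element of `X ∖ I` is greater
than all elements of `I` or smaller than all of them. -/
def IsIntervalOf {α : Type*} [LinearOrder α] (X I : Set α) : Prop :=
  I ⊆ X ∧ ∀ v ∈ X \ I, (∀ i ∈ I, v < i) ∨ (∀ i ∈ I, i < v)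

/-- A nontrivial interval of `X`. -/
def IsNontrivialIntervalOf {α : Type*} [LinearOrder α] (X I : Set α) : Prop :=
  IsIntervalOf X I ∧ ¬ IsTrivialSubset X I

/-- A family of blocks `P` on the totally ordered set `X` is irreducible if no nontrivial
interval of `X` is a union of blocks of `P`. -/
def IrreducibleOn {α : Type*} [LinearOrder α] (X : Set α) (P : Set (Set α)) : Prop :=
  ∀ R ⊆ P, ¬ IsNontrivialIntervalOf X (⋃₀ R)

/-- A partial quasi-pairing of `V`: a set `Q` of `m+1` two-element subsets of `V` (`m ≥ 1`)
whose union has size `2m+1`. -/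
def IsPartialQuasiPairingOn {α : Type*} (V : Set α) (Q : Set (Set α)) : Prop :=
  (∀ B ∈ Q, B ⊆ V ∧ B.ncard = 2) ∧
  ∃ m : ℕ, 1 ≤ m ∧ (⋃₀ Q).ncard = 2 * m + 1 ∧ Q.ncard = m + 1

/-- The distinguished data of a quasi-pairing `Q`: `vh = v̂_Q` is the element lying in the two
blocks `{vh, vm}` and `{vh, vp}` of `Q`, with `vm = v_Q^- < v_Q^+ = vp`. -/
def QPData {α : Type*} [LinearOrder α] (Q : Set (Set α)) (vh vm vp : α) : Prop :=
  ({vh, vm} : Set α) ∈ Q ∧ ({vh, vp} : Set α) ∈ Q ∧ vm < vp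

/-- `Q_part`: the partition of `⋃₀ Q` obtained from `Q` by merging its two intersecting
blocks into `B_Q = {v̂_Q, v_Q^-, v_Q^+}`. -/
def QPart {α : Type*} [LinearOrder α] (Q : Set (Set α)) (vh vm vp : α) : Set (Set α) :=
  (Q \ {({vh, vm} : Set α), ({vh, vp} : Set α)}) ∪ {({vh, vm, vp} : Set α)}

/-- Let `n ≥ 3`, `V = {0, …, n−1}`, and `Q` a partial quasi-pairing of
`V` with distinguished data `(vh, vm, vp)`. If there is `v ∈ V` with `1 ≤ v`,
`v + 1 ≤ n − 1`, `{v, v+1} ∈ Q`, `v̂_Q = v`, and `v − 1 ∉ ⋃₀ Q`, then `{v − 1, v + 1}`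
is a nontrivial module of `Inv(underline(n), Q)`; in particular, `Inv(underline(n), Q)`
is decomposable. -/
theorem stmt_17 (n : ℕ) (hn : 3 ≤ n) (Q : Set (Set ℕ))
    (hQ : IsPartialQuasiPairingOn (Set.Iio n) Q)
    (vh vm vp : ℕ) (hdata : QPData Q vh vm vp)
    (v : ℕ) (hv1 : 1 ≤ v) (hv2 : v + 1 ≤ n - 1)
    (h1 : ({v, v + 1} : Set ℕ) ∈ Q) (h2 : vh = v) (h3 : v - 1 ∉ ⋃₀ Q) :
    IsNontrivialModuleOn Q (Set.Iio n) {v - 1, v + 1} ∧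
      DecomposableOn Q (Set.Iio n) := by

  obtain ⟨hQ1, m, hm1, hmU, hmQ⟩ := hQ
  obtain ⟨hB1, hB2, hmp⟩ := hdata
  rw [h2] at hB1 hB2
  -- basic finiteness
  have hQfin : Q.Finite := by
    by_contra h
    have := Set.Infinite.ncard h
    omega
  have hBfin : ∀ B ∈ Q, B.Finite ∧ B.ncard ≤ 2 := fun B hB =>
    ⟨(Set.finite_Iio n).subset (hQ1 B hB).1, le_of_eq (hQ1 B hB).2⟩
  have hUfin : (⋃₀ Q).Finite := hQfin.sUnion (fun B hB => (hBfin B hB).1)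
  -- three distinct blocks cannot fit in a 4-element set
  have hthree : ∀ B1 B2 B3 : Set ℕ, B1 ∈ Q → B2 ∈ Q → B3 ∈ Q → B1 ≠ B2 → B1 ≠ B3 → B2 ≠ B3 →
      ∀ a b c d : ℕ, B1 ∪ B2 ∪ B3 ⊆ {a, b, c, d} → False := by
    intro B1 B2 B3 hm1' hm2' hm3' h12 h13 h23 a b c d hsub
    set T : Set (Set ℕ) := {B1, B2, B3} with hT
    have hTQ : T ⊆ Q := by
      rintro x (rfl | rfl | rfl) <;> assumption
    have hTcard : T.ncard = 3 := by
      rw [hT, Set.ncard_insert_of_notMem (by simp [h12, h13]) (Set.toFinite _),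
        Set.ncard_pair h23]
    have hm3 : 3 ≤ m + 1 := by
      rw [← hTcard, ← hmQ]
      exact Set.ncard_le_ncard hTQ hQfin
    have hsplit : ⋃₀ Q ⊆ (B1 ∪ B2 ∪ B3) ∪ ⋃₀ (Q \ T) := by
      rintro x ⟨B, hB, hxB⟩
      by_cases hBT : B ∈ T
      · left
        rcases hBT with rfl | rfl | rfl
        · exact Or.inl (Or.inl hxB)
        · exact Or.inl (Or.inr hxB)
        · exact Or.inr hxB
      · exact Or.inr ⟨B, ⟨hB, hBT⟩, hxB⟩
    have h4 : ({a, b, c, d} : Set ℕ).ncard ≤ 4 := by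
      have i1 := Set.ncard_insert_le a ({b, c, d} : Set ℕ)
      have i2 := Set.ncard_insert_le b ({c, d} : Set ℕ)
      have i3 := Set.ncard_insert_le c ({d} : Set ℕ)
      have i4 : ({d} : Set ℕ).ncard = 1 := Set.ncard_singleton d
      omega
    have hufin : (B1 ∪ B2 ∪ B3).Finite :=
      (((hBfin B1 hm1').1.union (hBfin B2 hm2').1).union (hBfin B3 hm3').1)
    have hufin2 : (⋃₀ (Q \ T)).Finite :=
      (hQfin.subset Set.diff_subset).sUnion (fun B hB => (hBfin B hB.1).1)
    have hb1 : (B1 ∪ B2 ∪ B3).ncard ≤ 4 :=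
      le_trans (Set.ncard_le_ncard hsub (Set.toFinite _)) h4
    have hb2 : (⋃₀ (Q \ T)).ncard ≤ 2 * (Q \ T).ncard :=
      sUnion_ncard_le_two_mul _ (hQfin.subset Set.diff_subset) (fun B hB => hBfin B hB.1)
    have hdiff : (Q \ T).ncard = (m + 1) - 3 := by
      rw [Set.ncard_diff hTQ (Set.toFinite _), hTcard, hmQ]
    have hle : (⋃₀ Q).ncard ≤ (B1 ∪ B2 ∪ B3).ncard + (⋃₀ (Q \ T)).ncard :=
      le_trans (Set.ncard_le_ncard hsplit (hufin.union hufin2)) (Set.ncard_union_le _ _)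
    omega
  -- distinctness facts
  have hne : ∀ a b : ℕ, ({a, b} : Set ℕ) ∈ Q → a ≠ b := by
    intro a b hab h'
    subst h'
    have := (hQ1 _ hab).2
    rw [Set.pair_eq_singleton, Set.ncard_singleton] at this
    omega
  have hvm : v ≠ vm := hne _ _ hB1
  have hvpne : v ≠ vp := hne _ _ hB2
  have hmp' : vm ≠ vp := ne_of_lt hmp
  have hB12 : ({v, vm} : Set ℕ) ≠ ({v, vp} : Set ℕ) := by
    intro h
    have : vm ∈ ({v, vp} : Set ℕ) := h ▸ (Set.mem_insert_of_mem _ rfl)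
    rcases this with h' | h'
    · exact hvm h'.symm
    · exact hmp' h'
  -- the key lemma: the only block containing v+1 is {v, v+1}
  have hkey : ∀ w : ℕ, ({w, v + 1} : Set ℕ) ∈ Q → w = v := by
    intro w hw
    by_contra hwv
    have hwv1 : w ≠ v + 1 := hne _ _ hw
    -- first: {v, v+1} must be one of the two distinguished blocks
    have hcase : ({v, v + 1} : Set ℕ) = {v, vm} ∨ ({v, v + 1} : Set ℕ) = {v, vp} := by
      by_contra hc
      push_neg at hc
      exact hthree _ _ _ h1 hB1 hB2 hc.1 hc.2 hB12 v (v + 1) vm vp (by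
        rintro x ((h' | h') | h')
        · rcases h' with rfl | rfl
          · exact Or.inl rfl
          · exact Or.inr (Or.inl rfl)
        · rcases h' with rfl | rfl
          · exact Or.inl rfl
          · exact Or.inr (Or.inr (Or.inl rfl))
        · rcases h' with rfl | rfl
          · exact Or.inl rfl
          · exact Or.inr (Or.inr (Or.inr rfl)))
    have hv1mem : v + 1 = vm ∨ v + 1 = vp := by
      rcases hcase with h' | h'
      · have : v + 1 ∈ ({v, vm} : Set ℕ) := h' ▸ Set.mem_insert_of_mem _ rfl
        rcases this with h'' | h''
        · omega
        · exact Or.inl h''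
      · have : v + 1 ∈ ({v, vp} : Set ℕ) := h' ▸ Set.mem_insert_of_mem _ rfl
        rcases this with h'' | h''
        · omega
        · exact Or.inr h''
    -- {w, v+1} is a third block
    have hw1 : ({w, v + 1} : Set ℕ) ≠ ({v, vm} : Set ℕ) := by
      intro h'
      have hwm : w ∈ ({v, vm} : Set ℕ) := h' ▸ Set.mem_insert _ _
      have hv1m : v + 1 ∈ ({v, vm} : Set ℕ) := h' ▸ Set.mem_insert_of_mem _ rfl
      rcases hwm with h'' | h''
      · exact hwv h''
      · rcases hv1m with h3' | h3'
        · omega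
        · exact hwv1 (h''.trans h3'.symm)
    have hw2 : ({w, v + 1} : Set ℕ) ≠ ({v, vp} : Set ℕ) := by
      intro h'
      have hwm : w ∈ ({v, vp} : Set ℕ) := h' ▸ Set.mem_insert _ _
      have hv1m : v + 1 ∈ ({v, vp} : Set ℕ) := h' ▸ Set.mem_insert_of_mem _ rfl
      rcases hwm with h'' | h''
      · exact hwv h''
      · rcases hv1m with h3' | h3'
        · omega
        · exact hwv1 (h''.trans h3'.symm)
    exact hthree _ _ _ hB1 hB2 hw (hB12) (Ne.symm hw1) (Ne.symm hw2) v vm vp w (by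
      rintro x ((h' | h') | h')
      · rcases h' with rfl | rfl
        · exact Or.inl rfl
        · exact Or.inr (Or.inl rfl)
      · rcases h' with rfl | rfl
        · exact Or.inl rfl
        · exact Or.inr (Or.inr (Or.inl rfl))
      · rcases h' with rfl | rfl
        · exact Or.inr (Or.inr (Or.inr rfl))
        · rcases hv1mem with h'' | h''
          · exact Or.inr (Or.inl h'')
          · exact Or.inr (Or.inr (Or.inl h'')))
  -- v - 1 is in no block
  have hvm1 : ∀ B ∈ Q, v - 1 ∉ B := fun B hB hx => h3 ⟨B, hB, hx⟩
  have hvm1pair : ∀ w : ℕ, ({w, v - 1} : Set ℕ) ∉ Q := fun w hw =>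
    hvm1 _ hw (Set.mem_insert_of_mem _ rfl)
  have hvm1pair' : ∀ w : ℕ, ({v - 1, w} : Set ℕ) ∉ Q := fun w hw =>
    hvm1 _ hw (Set.mem_insert _ _)
  have hkey' : ∀ w : ℕ, w ≠ v → ({w, v + 1} : Set ℕ) ∉ Q := fun w hw h' => hw (hkey w h')
  have hkey'' : ∀ w : ℕ, w ≠ v → ({v + 1, w} : Set ℕ) ∉ Q := by
    intro w hw h'
    rw [Set.pair_comm] at h'
    exact hkey' w hw h'
  -- the module
  have hmod : IsNontrivialModuleOn Q (Set.Iio n) {v - 1, v + 1} := by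
    constructor
    · constructor
      · rintro x (rfl | rfl) <;> simp [Set.mem_Iio] <;> omega
      · intro w hw hwM
        simp only [Set.mem_insert_iff, Set.mem_singleton_iff, not_or] at hwM
        have hcases : w = v ∨ w < v - 1 ∨ v + 1 < w := by omega
        rcases hcases with rfl | hlt | hgt
        · right
          rintro x (rfl | rfl)
          · exact Or.inl ⟨by omega, hvm1pair' w⟩
          · refine Or.inr ⟨by omega, ?_⟩
            rw [Set.pair_comm]
            exact h1
        · left
          rintro x (rfl | rfl)
          · exact Or.inl ⟨hlt, hvm1pair _⟩
          · exact Or.inl ⟨by omega, hkey' w (by omega)⟩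
        · right
          rintro x (rfl | rfl)
          · exact Or.inl ⟨by omega, hvm1pair' _⟩
          · exact Or.inl ⟨hgt, hkey'' w (by omega)⟩
    · rintro (he | ⟨a, ha⟩ | hfull)
      · have : v - 1 ∈ ({v - 1, v + 1} : Set ℕ) := Set.mem_insert _ _
        rw [he] at this
        exact this
      · have h1' : v - 1 ∈ ({a} : Set ℕ) := ha ▸ Set.mem_insert _ _
        have h2' : v + 1 ∈ ({a} : Set ℕ) := ha ▸ Set.mem_insert_of_mem _ rfl
        simp only [Set.mem_singleton_iff] at h1' h2'
        omega
      · have hvIio : v ∈ Set.Iio n := by simp [Set.mem_Iio]; omega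
        rw [← hfull] at hvIio
        simp only [Set.mem_insert_iff, Set.mem_singleton_iff] at hvIio
        omega
  exact ⟨hmod, ⟨_, hmod⟩⟩
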